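/- Let Λ be a staircase shape: the set of cells {(i,j) ∈ ℤ² : 1 ≤ j ≤ i ≤ n}. Interpret cell (i,j) as the route of the caracol graph Path(n) entering at inner vertex j and exiting at inner vertex i; two cells (i,j) and (i',j') with j ≤ i and j' ≤ i' correspond to conflicting routes if and only if one is strictly northwest of the other within the shape, i.e., (after suitable ordering) j < j' ≤ i < i'. Prove: two distinct non-exceptional routes (i,j) and (i',j') of the caracol graph Path(n) with the standard ample framing are in conflict if and only if j < j' ≤ i < i' or j' < j ≤ i' < i. -/

import Mathlib

/-- Edges of the caracol graph `Path(n)` on vertices `0, 1, …, n, n+1` (with source `0`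
and sink `n+1`): horizontal edges `i → i+1`, source arcs `0 → i`, and sink arcs
`i → n+1`. -/
inductive CaracolEdge where
  | horiz : ℕ → CaracolEdge
  | arcS : ℕ → CaracolEdge
  | arcT : ℕ → CaracolEdge
deriving DecidableEq

open CaracolEdge

def caracolSrc : CaracolEdge → ℕ
  | horiz i => i
  | arcS _ => 0
  | arcT i => i

def caracolTgt (n : ℕ) : CaracolEdge → ℕ
  | horiz i => i + 1
  | arcS i => i
  | arcT _ => n + 1

/-- The standard ample (lab) framing of the caracol: horizontal edges are labeled `2`,
arcs are labeled `1`. -/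
def caracolLabel : CaracolEdge → ℕ
  | horiz _ => 2
  | arcS _ => 1
  | arcT _ => 1

/-- The route of the caracol entering the inner path at inner vertex `j` and exiting at
inner vertex `i` (with `j ≤ i`): source arc to `j`, horizontal edges `j, …, i-1`, and
the sink arc from `i`. -/
def caracolRoute (j i : ℕ) : List CaracolEdge :=
  arcS j :: ((List.range' j (i - j)).map horiz ++ [arcT i])

/-- Two routes `R` and `S` of a framed DAG (given by `src`, `tgt`, and edge labels `ℓ`)
are in conflict if they share a common subroute `M` from a vertex `u` to a vertex `v`
(possibly `u = v` and `M` empty), have distinct edges `pR, pS` entering `u` and distinct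
edges `nR, nS` leaving `v`, and the framing orders of the entering and leaving edges
disagree. -/
def RoutesConflict {V E : Type*} (src tgt : E → V) (ℓ : E → ℕ) (R S : List E) : Prop :=
  ∃ (pR pS nR nS : E) (A B C D M : List E),
    R = A ++ pR :: (M ++ nR :: B) ∧
    S = C ++ pS :: (M ++ nS :: D) ∧
    tgt pR = tgt pS ∧ src nR = src nS ∧
    ((ℓ pR < ℓ pS ∧ ℓ nS < ℓ nR) ∨ (ℓ pS < ℓ pR ∧ ℓ nR < ℓ nS))

lemma range'_split (a b c : ℕ) (hab : a ≤ b) (hbc : b ≤ c) :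
    List.range' a (c - a) = List.range' a (b - a) ++ List.range' b (c - b) := by
  have h := List.range'_append (s := a) (m := b - a) (n := c - b) (step := 1)
  rw [show a + 1 * (b - a) = b by omega, show (b - a) + (c - b) = c - a by omega] at h
  exact h.symm

lemma mem_caracolRoute {j i : ℕ} (hij : j ≤ i) (e : CaracolEdge) :
    e ∈ caracolRoute j i ↔ e = arcS j ∨ (∃ k, j ≤ k ∧ k < i ∧ e = horiz k) ∨ e = arcT i := by
  simp only [caracolRoute, List.mem_cons, List.mem_append, List.mem_map, List.mem_singleton,
    List.mem_range'_1]
  constructor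
  · rintro h
    rcases h with h | ⟨k, ⟨hk1, hk2⟩, rfl⟩ | h
    · exact Or.inl h
    · exact Or.inr (Or.inl ⟨k, hk1, by omega, rfl⟩)
    · rcases h with h | h
      · exact Or.inr (Or.inr h)
      · exact absurd h List.not_mem_nil
  · rintro (h | ⟨k, hk1, hk2, rfl⟩ | h)
    · exact Or.inl h
    · exact Or.inr (Or.inl ⟨k, ⟨hk1, by omega⟩, rfl⟩)
    · exact Or.inr (Or.inr (Or.inl h))

lemma conflict_of_cross (n j i j' i' : ℕ) (h1' : 1 ≤ j') (hjj' : j < j') (hj'i : j' ≤ i)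
    (hii' : i < i') :
    RoutesConflict caracolSrc (caracolTgt n) caracolLabel
      (caracolRoute j i) (caracolRoute j' i') := by
  refine ⟨horiz (j' - 1), arcS j', arcT i, horiz i,
    arcS j :: (List.range' j (j' - 1 - j)).map horiz, [], [],
    (List.range' (i + 1) (i' - (i + 1))).map horiz ++ [arcT i'],
    (List.range' j' (i - j')).map horiz, ?_, ?_, ?_, ?_, ?_⟩
  · show caracolRoute j i = _
    rw [caracolRoute, range'_split j (j' - 1) i (by omega) (by omega),
      show i - (j' - 1) = (i - j') + 1 by omega, List.range'_succ,
      show j' - 1 + 1 = j' by omega]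
    simp
  · show caracolRoute j' i' = _
    rw [caracolRoute, range'_split j' i i' hj'i (by omega),
      show i' - i = (i' - (i + 1)) + 1 by omega, List.range'_succ]
    simp
  · show j' - 1 + 1 = j'; omega
  · rfl
  · right; exact ⟨by simp [caracolLabel], by simp [caracolLabel]⟩

lemma conflict_symm {V E : Type*} {src tgt : E → V} {ℓ : E → ℕ} {R S : List E}
    (h : RoutesConflict src tgt ℓ R S) : RoutesConflict src tgt ℓ S R := by
  obtain ⟨pR, pS, nR, nS, A, B, C, D, M, h1, h2, h3, h4, h5⟩ := h
  exact ⟨pS, pR, nS, nR, C, D, A, B, M, h2, h1, h3.symm, h4.symm, h5.symm⟩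

/-- Two distinct non-exceptional routes `(j,i)` and `(j',i')` of the
caracol graph `Path(n)` with the standard ample framing are in conflict if and only if
`j < j' ≤ i < i'` or `j' < j ≤ i' < i`. -/
theorem caracol_conflict_iff_strictly_cross (n j i j' i' : ℕ)
    (h1 : 1 ≤ j) (h2 : j ≤ i) (h3 : i ≤ n)
    (h1' : 1 ≤ j') (h2' : j' ≤ i') (h3' : i' ≤ n)
    (hne : (j, i) ≠ (j', i'))
    (hexc : ¬ ∀ e ∈ caracolRoute j i, ∀ f ∈ caracolRoute j i,
      caracolLabel e = caracolLabel f)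
    (hexc' : ¬ ∀ e ∈ caracolRoute j' i', ∀ f ∈ caracolRoute j' i',
      caracolLabel e = caracolLabel f) :
    RoutesConflict caracolSrc (caracolTgt n) caracolLabel
        (caracolRoute j i) (caracolRoute j' i') ↔
      ((j < j' ∧ j' ≤ i ∧ i < i') ∨ (j' < j ∧ j ≤ i' ∧ i' < i)) := by
  constructor
  · rintro ⟨pR, pS, nR, nS, A, B, C, D, M, hR, hS, htgt, hsrc, hlab⟩
    have hpR : pR ∈ caracolRoute j i := by rw [hR]; simp
    have hnR : nR ∈ caracolRoute j i := by rw [hR]; simp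
    have hpS : pS ∈ caracolRoute j' i' := by rw [hS]; simp
    have hnS : nS ∈ caracolRoute j' i' := by rw [hS]; simp
    rw [mem_caracolRoute h2] at hpR hnR
    rw [mem_caracolRoute h2'] at hpS hnS
    rcases hpR with rfl | ⟨k, hk1, hk2, rfl⟩ | rfl <;>
      rcases hpS with rfl | ⟨k', hk1', hk2', rfl⟩ | rfl <;>
      rcases hnR with rfl | ⟨m, hm1, hm2, rfl⟩ | rfl <;>
      rcases hnS with rfl | ⟨m', hm1', hm2', rfl⟩ | rfl <;>
      simp only [caracolTgt, caracolSrc, caracolLabel] at htgt hsrc hlab <;>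
      omega
  · rintro (⟨ha, hb, hc⟩ | ⟨ha, hb, hc⟩)
    · exact conflict_of_cross n j i j' i' h1' ha hb hc
    · exact conflict_symm (conflict_of_cross n j' i' j i h1 ha hb hc)
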